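/- Let v_1, …, v_d be A-orthonormal (v_iᵀ A v_j = δ_{ij}) with A symmetric positive definite, and suppose span(v_1,…,v_m) = span(s_1,…,s_m) where S_m are the first m columns used for conditioning. With prior covariance Σ_0 = V_d Ψ V_dᵀ for diagonal Ψ with positive entries, the posterior covariance after conditioning on S_mᵀ A x = S_mᵀ b equals V̄_m Ψ̄_m V̄_mᵀ, where V̄_m = [v_{m+1}, …, v_d] and Ψ̄_m = diag(ψ_{m+1}, …, ψ_d). -/

import Mathlib

open Matrix
open scoped Matrix

private theorem JPJ_aux (m n : ℕ) (w : Fin (m+n) → ℝ)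
    (J : Matrix (Fin (m + n)) (Fin m) ℝ)
    (hJ : J = Matrix.of (fun i k => if i = Fin.castAdd n k then (1:ℝ) else 0)) :
    Jᵀ * Matrix.diagonal w * J = Matrix.diagonal (fun k => w (Fin.castAdd n k)) := by
  ext k l
  rw [Matrix.mul_apply]
  simp only [Matrix.mul_diagonal, hJ, Matrix.transpose_apply, Matrix.of_apply,
    ite_mul, mul_ite, one_mul, zero_mul, mul_one, mul_zero, Finset.sum_ite_eq',
    Finset.mem_univ, if_true]
  by_cases h : k = l
  · subst h; simp
  · rw [if_neg (fun h' => h ((Fin.castAdd_inj.mp h').symm)), Matrix.diagonal_apply_ne _ h]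

private theorem JPJ_aux' (m n : ℕ) (w : Fin m → ℝ)
    (J : Matrix (Fin (m + n)) (Fin m) ℝ)
    (hJ : J = Matrix.of (fun i k => if i = Fin.castAdd n k then (1:ℝ) else 0)) :
    J * Matrix.diagonal w * Jᵀ
      = Matrix.diagonal (fun i : Fin (m+n) => if h : (i:ℕ) < m then w ⟨i, h⟩ else 0) := by
  ext i i'
  rw [Matrix.mul_apply]
  simp only [Matrix.mul_diagonal, hJ, Matrix.transpose_apply, Matrix.of_apply,
    ite_mul, mul_ite, one_mul, zero_mul, mul_one, mul_zero]
  by_cases h : (i:ℕ) < m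
  · have hi : i = Fin.castAdd n ⟨i, h⟩ := by ext; simp
    rw [Finset.sum_eq_single (⟨(i:ℕ), h⟩ : Fin m)]
    · by_cases h' : i = i'
      · subst h'
        simp [← hi, h]
      · have hni' : ¬ i' = Fin.castAdd n ⟨i, h⟩ := fun hc => h' (hi.trans hc.symm)
        simp [← hi, hni', Matrix.diagonal_apply, h']
        exact fun hc => absurd hc.symm h'
    · intro b _ hb
      have hni : ¬ i = Fin.castAdd n b := by
        intro hc
        exact hb (by ext; simpa using (congrArg Fin.val hc).symm)
      simp [hni]
    · simp
  · rw [Finset.sum_eq_zero, Matrix.diagonal_apply]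
    · by_cases h' : i = i'
      · subst h'; rw [if_pos rfl, dif_neg h]
      · rw [if_neg h']
    · intro b _
      have hni : ¬ i = Fin.castAdd n b := by
        intro hc
        have := congrArg Fin.val hc
        simp at this
        omega
      simp [hni]

/-- Under the Krylov prior `Σ₀ = V Ψ Vᵀ` with `V` an `A`-orthonormal basis
whose first `m` columns span the same space as the columns of `S`, the posterior
covariance after conditioning on `Sᵀ A x = Sᵀ b` is `V̄ Ψ̄ V̄ᵀ`. -/
theorem krylov_prior_posterior_covariance
    (m n : ℕ)
    (A V : Matrix (Fin (m + n)) (Fin (m + n)) ℝ)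
    (hA : A.PosDef) (hV : Vᵀ * A * V = 1)
    (ψ : Fin (m + n) → ℝ) (hψ : ∀ i, 0 < ψ i)
    (S : Matrix (Fin (m + n)) (Fin m) ℝ)
    (hS : LinearIndependent ℝ (fun j : Fin m => Sᵀ j))
    (hspan : Submodule.span ℝ (Set.range (V.submatrix id (Fin.castAdd n))ᵀ)
      = Submodule.span ℝ (Set.range Sᵀ))
    (hΛ : IsUnit (Sᵀ * A * (V * Matrix.diagonal ψ * Vᵀ) * A * S).det) :
    V * Matrix.diagonal ψ * Vᵀ
      - (V * Matrix.diagonal ψ * Vᵀ) * A * S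
        * (Sᵀ * A * (V * Matrix.diagonal ψ * Vᵀ) * A * S)⁻¹
        * Sᵀ * A * (V * Matrix.diagonal ψ * Vᵀ)
    = V.submatrix id (Fin.natAdd m)
        * Matrix.diagonal (fun i : Fin n => ψ (Fin.natAdd m i))
        * (V.submatrix id (Fin.natAdd m))ᵀ := by
  have hAt : Aᵀ = A := by simpa [Matrix.IsSymm] using hA.isHermitian
  set V₁ : Matrix (Fin (m + n)) (Fin m) ℝ := V.submatrix id (Fin.castAdd n) with hV₁def
  set V₂ : Matrix (Fin (m + n)) (Fin n) ℝ := V.submatrix id (Fin.natAdd m) with hV₂def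
  -- block orthogonality: V₂ᵀ A V₁ = 0
  have hVAV21 : V₂ᵀ * A * V₁ = 0 := by
    ext i j
    have h1 : (Vᵀ * A * V) (Fin.natAdd m i) (Fin.castAdd n j) = 0 := by
      rw [hV, Matrix.one_apply_ne]
      intro h
      have := congrArg Fin.val h
      simp [Fin.natAdd, Fin.castAdd, Fin.castLE] at this
      omega
    rw [Matrix.zero_apply, ← h1]
    simp [Matrix.mul_apply, hV₂def, hV₁def]
  -- columns of S are killed by V₂ᵀ A
  have hbot : V₂ᵀ * A * S = 0 := by
    have hsub : Submodule.span ℝ (Set.range Sᵀ)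
        ≤ LinearMap.ker (Matrix.mulVecLin (V₂ᵀ * A)) := by
      rw [← hspan, Submodule.span_le]
      rintro x ⟨k, rfl⟩
      rw [SetLike.mem_coe, LinearMap.mem_ker]
      ext i
      have h2 := congrFun (congrFun hVAV21 i) k
      simpa [Matrix.mulVecLin, Matrix.mulVec, dotProduct, Matrix.mul_apply,
        hV₁def, Matrix.transpose_apply, -Matrix.mulVecLin_mul, -Matrix.mulVecLin_transpose] using h2
    ext i j
    have hj : Sᵀ j ∈ Submodule.span ℝ (Set.range Sᵀ) :=
      Submodule.subset_span ⟨j, rfl⟩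
    have hk := hsub hj
    rw [LinearMap.mem_ker] at hk
    have h3 := congrFun hk i
    rw [Matrix.zero_apply]
    simpa [Matrix.mulVecLin, Matrix.mulVec, dotProduct, Matrix.mul_apply,
      Matrix.transpose_apply, -Matrix.mulVecLin_mul, -Matrix.mulVecLin_transpose] using h3
  -- the inclusion matrix
  set J : Matrix (Fin (m + n)) (Fin m) ℝ :=
    Matrix.of (fun i k => if i = Fin.castAdd n k then (1:ℝ) else 0) with hJdef
  set C : Matrix (Fin m) (Fin m) ℝ := V₁ᵀ * A * S with hCdef
  have hT : Vᵀ * A * S = J * C := by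
    ext i j
    refine Fin.addCases (fun i₀ => ?_) (fun i₀ => ?_) i
    · have hJC : (J * C) (Fin.castAdd n i₀) j = C i₀ j := by
        simp only [Matrix.mul_apply, hJdef, Matrix.of_apply]
        rw [Finset.sum_eq_single i₀]
        · simp
        · intro b _ hb
          rw [if_neg, zero_mul]
          intro h
          exact hb (Fin.castAdd_inj.mp h).symm
        · simp
      rw [hJC]
      simp [hCdef, Matrix.mul_apply, hV₁def]
    · have h0 := congrFun (congrFun hbot i₀) j
      rw [Matrix.zero_apply] at h0
      have hL : (Vᵀ * A * S) (Fin.natAdd m i₀) j = 0 := by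
        rw [← h0]
        simp [Matrix.mul_apply, hV₂def]
      rw [hL]
      symm
      simp only [Matrix.mul_apply, hJdef, Matrix.of_apply]
      apply Finset.sum_eq_zero
      intro k _
      rw [if_neg, zero_mul]
      intro h
      have := congrArg Fin.val h
      simp [Fin.natAdd, Fin.castAdd, Fin.castLE] at this
      omega
  have hSt : Sᵀ * A * V = Cᵀ * Jᵀ := by
    have h4 : Sᵀ * A * V = (Vᵀ * A * S)ᵀ := by
      rw [Matrix.transpose_mul, Matrix.transpose_mul, Matrix.transpose_transpose, hAt,
        Matrix.mul_assoc]
    rw [h4, hT, Matrix.transpose_mul]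
  set Ψ₁ : Matrix (Fin m) (Fin m) ℝ := Matrix.diagonal (fun k => ψ (Fin.castAdd n k)) with hΨ₁def
  set Ψ₁inv : Matrix (Fin m) (Fin m) ℝ :=
    Matrix.diagonal (fun k => (ψ (Fin.castAdd n k))⁻¹) with hΨ₁invdef
  -- the Gram matrix
  have hN : Sᵀ * A * (V * Matrix.diagonal ψ * Vᵀ) * A * S = Cᵀ * Ψ₁ * C := by
    have e1 : Sᵀ * A * (V * Matrix.diagonal ψ * Vᵀ) * A * S
        = (Sᵀ * A * V) * (Matrix.diagonal ψ) * (Vᵀ * (A * S)) := by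
      simp only [Matrix.mul_assoc]
    rw [e1, ← Matrix.mul_assoc Vᵀ A S, hSt, hT, hΨ₁def, ← JPJ_aux m n ψ J hJdef]
    simp only [Matrix.mul_assoc]
  have hdetC : IsUnit C.det := by
    rw [hN] at hΛ
    simp only [Matrix.det_mul, IsUnit.mul_iff] at hΛ
    exact hΛ.2
  have hdetCt : IsUnit Cᵀ.det := by rwa [Matrix.det_transpose]
  have hΨ₁inveq : Ψ₁⁻¹ = Ψ₁inv := by
    apply Matrix.inv_eq_right_inv
    have hone : (fun k => ψ (Fin.castAdd n k) * (ψ (Fin.castAdd n k))⁻¹) = fun _ => (1:ℝ) :=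
      funext fun k => mul_inv_cancel₀ (hψ _).ne'
    rw [hΨ₁def, hΨ₁invdef, Matrix.diagonal_mul_diagonal, hone, Matrix.diagonal_one]
  have hinner : (Vᵀ * A * S) * (Sᵀ * A * (V * Matrix.diagonal ψ * Vᵀ) * A * S)⁻¹ * (Sᵀ * A * V)
      = J * Ψ₁inv * Jᵀ := by
    rw [hT, hSt, hN, Matrix.mul_inv_rev, Matrix.mul_inv_rev, hΨ₁inveq]
    have e2 : J * C * (C⁻¹ * (Ψ₁inv * (Cᵀ)⁻¹)) * (Cᵀ * Jᵀ)
        = J * ((C * C⁻¹) * (Ψ₁inv * (((Cᵀ)⁻¹ * Cᵀ) * Jᵀ))) := by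
      simp only [Matrix.mul_assoc]
    rw [e2, Matrix.mul_nonsing_inv _ hdetC, Matrix.nonsing_inv_mul _ hdetCt]
    simp only [Matrix.one_mul, Matrix.mul_assoc]
  -- rewrite the subtrahend
  have hsub2 : (V * Matrix.diagonal ψ * Vᵀ) * A * S
        * (Sᵀ * A * (V * Matrix.diagonal ψ * Vᵀ) * A * S)⁻¹ * Sᵀ * A * (V * Matrix.diagonal ψ * Vᵀ)
      = V * (Matrix.diagonal ψ
          * ((Vᵀ * A * S) * (Sᵀ * A * (V * Matrix.diagonal ψ * Vᵀ) * A * S)⁻¹ * (Sᵀ * A * V))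
          * Matrix.diagonal ψ) * Vᵀ := by
    simp only [Matrix.mul_assoc]
  rw [hsub2, hinner, hΨ₁invdef, JPJ_aux' m n _ J hJdef,
    Matrix.diagonal_mul_diagonal, Matrix.diagonal_mul_diagonal,
    ← Matrix.sub_mul, ← Matrix.mul_sub, Matrix.diagonal_sub]
  -- final entrywise computation
  ext a b
  rw [Matrix.mul_apply]
  simp only [Matrix.mul_diagonal, Matrix.transpose_apply, hV₂def, Matrix.submatrix_apply,
    id_eq, Pi.sub_apply]
  rw [Fin.sum_univ_add]
  have hzero : ∀ i : Fin m,
      V a (Fin.castAdd n i) * (ψ (Fin.castAdd n i)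
        - ψ (Fin.castAdd n i) * (if h : ((Fin.castAdd n i : Fin (m+n)) : ℕ) < m
            then (ψ (Fin.castAdd n ⟨((Fin.castAdd n i : Fin (m+n)) : ℕ), h⟩))⁻¹ else 0)
          * ψ (Fin.castAdd n i)) * V b (Fin.castAdd n i) = 0 := by
    intro i
    have hlt : ((Fin.castAdd n i : Fin (m+n)) : ℕ) < m := by simp
    rw [dif_pos hlt]
    have hcc : Fin.castAdd n (⟨((Fin.castAdd n i : Fin (m+n)) : ℕ), hlt⟩ : Fin m)
        = Fin.castAdd n i := by ext; simp
    rw [hcc, mul_inv_cancel₀ (hψ _).ne', one_mul, sub_self, mul_zero, zero_mul]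
  rw [Finset.sum_congr rfl (fun i _ => hzero i), Finset.sum_const_zero, zero_add]
  apply Finset.sum_congr rfl
  intro i _
  have hnlt : ¬ ((Fin.natAdd m i : Fin (m+n)) : ℕ) < m := by simp
  rw [dif_neg hnlt, mul_zero, zero_mul, sub_zero]
  simp [Matrix.mul_diagonal]
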